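/- Let Y be the set of all sequences y ∈ {0,1,2}^ℕ such that either y_n ∈ {0,1} for all n or y_n ∈ {0,2} for all n, equipped with the metric d(x,y) = 2^{−min{n : x_n ≠ y_n}} for x ≠ y (and d(x,x) = 0), and let g : Y → Y be the left shift, g(y)_n = y_{n+1}. Then g is a continuous surjection, but (Y,d,g) fails Axiom 2 for every choice of constants: for all integers K ≥ 1, all 0 < γ < 1 and all β > 0, there exist x ∈ Y and 0 < ε ≤ β such that g^K(B(g^K(x), ε)) is not contained in g^{2K}(B(x, γε)), where B(·,·) denotes a closed ball. -/

import Mathlib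

open Function
open scoped Classical

/-- `Y = Σ⁺_{0,1} ∪ Σ⁺_{0,2}`: one-sided sequences in `{0,1,2}` omitting the symbol `2`
or omitting the symbol `1`. -/
abbrev YShift : Type :=
  {y : ℕ → Fin 3 // (∀ n : ℕ, y n ≠ 2) ∨ (∀ n : ℕ, y n ≠ 1)}

/-- The metric `d(x,y) = 2^{-min{n : x_n ≠ y_n}}` (and `d(x,x) = 0`). -/

noncomputable def dY (x y : YShift) : ℝ :=
  if x = y then 0 else (2 : ℝ)⁻¹ ^ sInf {n : ℕ | x.1 n ≠ y.1 n}

/-- The left shift on `Y`. -/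
def shiftY (y : YShift) : YShift :=
  ⟨fun n => y.1 (n + 1), y.2.imp (fun h n => h (n + 1)) (fun h n => h (n + 1))⟩

lemma dY_nonneg (x y : YShift) : 0 ≤ dY x y := by
  unfold dY
  split
  · exact le_rfl
  · positivity

lemma shiftY_iter (K : ℕ) (z : YShift) (n : ℕ) : (shiftY^[K] z).1 n = z.1 (n + K) := by
  induction K generalizing n with
  | zero => rfl
  | succ k ih =>
    rw [Function.iterate_succ_apply']
    show (shiftY^[k] z).1 (n + 1) = _
    have h : n + 1 + k = n + (k + 1) := by omega
    rw [ih, h]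

lemma dY_shift_le (x y : YShift) : dY (shiftY x) (shiftY y) ≤ 2 * dY x y := by
  by_cases hs : shiftY x = shiftY y
  · have : dY (shiftY x) (shiftY y) = 0 := by simp [dY, hs]
    rw [this]
    have := dY_nonneg x y; linarith
  · have hxy : x ≠ y := fun h => hs (by rw [h])
    have hSne : {n : ℕ | (shiftY x).1 n ≠ (shiftY y).1 n}.Nonempty := by
      by_contra h
      apply hs
      apply Subtype.ext
      funext n
      by_contra hn
      exact h ⟨n, hn⟩
    set k := sInf {n : ℕ | (shiftY x).1 n ≠ (shiftY y).1 n} with hk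
    have hkmem : (shiftY x).1 k ≠ (shiftY y).1 k := Nat.sInf_mem hSne
    have hk1 : x.1 (k + 1) ≠ y.1 (k + 1) := hkmem
    have hle : sInf {n : ℕ | x.1 n ≠ y.1 n} ≤ k + 1 := Nat.sInf_le hk1
    have h1 : dY (shiftY x) (shiftY y) = (2 : ℝ)⁻¹ ^ k := by simp [dY, hs]; rfl
    have h2 : dY x y = (2 : ℝ)⁻¹ ^ sInf {n : ℕ | x.1 n ≠ y.1 n} := by simp [dY, hxy]
    rw [h1, h2]
    have hpow : (2 : ℝ)⁻¹ ^ (k + 1) ≤ (2 : ℝ)⁻¹ ^ sInf {n : ℕ | x.1 n ≠ y.1 n} :=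
      pow_le_pow_of_le_one (by norm_num) (by norm_num) hle
    calc (2 : ℝ)⁻¹ ^ k = 2 * (2 : ℝ)⁻¹ ^ (k + 1) := by ring
      _ ≤ 2 * (2 : ℝ)⁻¹ ^ sInf {n : ℕ | x.1 n ≠ y.1 n} := by linarith

/-- Example 2: the left shift on `Σ⁺_{0,1} ∪ Σ⁺_{0,2}` is a continuous surjection,
but Axiom 2 fails for every choice of constants `K ≥ 1`, `0 < γ < 1`, `β > 0`. -/
theorem stmt18 :
    (∀ (x : YShift) (ε : ℝ), 0 < ε → ∃ δ : ℝ, 0 < δ ∧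
      ∀ y : YShift, dY x y ≤ δ → dY (shiftY x) (shiftY y) ≤ ε) ∧
    Function.Surjective shiftY ∧
    ∀ K : ℕ, 1 ≤ K → ∀ γ : ℝ, 0 < γ → γ < 1 → ∀ β : ℝ, 0 < β →
      ∃ (x : YShift) (ε : ℝ), 0 < ε ∧ ε ≤ β ∧
        ¬(shiftY^[K] '' {y : YShift | dY (shiftY^[K] x) y ≤ ε} ⊆
            shiftY^[2 * K] '' {y : YShift | dY x y ≤ γ * ε}) := by
  refine ⟨?_, ?_, ?_⟩
  · -- continuity
    intro x ε hε
    refine ⟨ε / 2, by linarith, fun y hy => ?_⟩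
    have := dY_shift_le x y
    linarith
  · -- surjectivity
    intro y
    refine ⟨⟨fun n => Nat.casesOn n 0 (fun k => y.1 k), ?_⟩, ?_⟩
    · rcases y.2 with h | h
      · refine Or.inl fun n => ?_
        cases n with
        | zero => show (0 : Fin 3) ≠ 2; decide
        | succ k => exact h k
      · refine Or.inr fun n => ?_
        cases n with
        | zero => show (0 : Fin 3) ≠ 1; decide
        | succ k => exact h k
    · apply Subtype.ext
      funext n
      rfl
  · -- failure of Axiom 2
    intro K hK γ hγ0 hγ1 β hβ
    -- choose m ≥ 1 with 2⁻¹ ^ m ≤ β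
    obtain ⟨m0, hm0⟩ : ∃ n : ℕ, (2 : ℝ)⁻¹ ^ n < β :=
      exists_pow_lt_of_lt_one hβ (by norm_num)
    set m := max m0 1 with hm
    have hm1 : 1 ≤ m := le_max_right _ _
    set ε : ℝ := (2 : ℝ)⁻¹ ^ m with hε
    have hε0 : 0 < ε := by positivity
    have hεβ : ε ≤ β := by
      have : (2 : ℝ)⁻¹ ^ m ≤ (2 : ℝ)⁻¹ ^ m0 :=
        pow_le_pow_of_le_one (by norm_num) (by norm_num) (le_max_left _ _)
      linarith
    have hεhalf : ε ≤ 2⁻¹ := by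
      calc ε = (2 : ℝ)⁻¹ ^ m := rfl
        _ ≤ (2 : ℝ)⁻¹ ^ 1 := pow_le_pow_of_le_one (by norm_num) (by norm_num) hm1
        _ = 2⁻¹ := pow_one _
    -- define x = (1,0,0,0,…) and y = (0^m, 2,2,2,…)
    set x : YShift := ⟨fun n => if n = 0 then 1 else 0, Or.inl (fun n => by
      by_cases h : n = 0 <;> simp [h])⟩ with hxdef
    set y : YShift := ⟨fun n => if n < m then 0 else 2, Or.inr (fun n => by
      by_cases h : n < m <;> simp [h])⟩ with hydef
    refine ⟨x, ε, hε0, hεβ, ?_⟩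
    intro hsub
    -- shiftY^[K] x is the all-zero sequence
    have hxK : ∀ n, (shiftY^[K] x).1 n = 0 := by
      intro n
      rw [shiftY_iter]
      have : n + K ≠ 0 := by omega
      simp [hxdef, this]
      intro _; omega
    -- dY (shiftY^[K] x) y = ε
    have hdxy : dY (shiftY^[K] x) y = ε := by
      have hne : shiftY^[K] x ≠ y := by
        intro h
        have := congrArg (fun z => z.1 m) h
        rw [hxK m] at this
        simp [hydef] at this
      have hset : {n : ℕ | (shiftY^[K] x).1 n ≠ y.1 n} = {n : ℕ | m ≤ n} := by
        ext n
        simp only [Set.mem_setOf_eq, hxK]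
        by_cases h : n < m
        · simp [hydef, h]
        · simp [hydef, h]
          omega
      have hinf : sInf {n : ℕ | (shiftY^[K] x).1 n ≠ y.1 n} = m := by
        rw [hset]
        refine le_antisymm (Nat.sInf_le (by simp : m ∈ {n : ℕ | m ≤ n})) ?_
        exact Nat.sInf_mem (⟨m, by simp⟩ : {n : ℕ | m ≤ n}.Nonempty)
      simp [dY, hne, hinf, hε]
    -- the witness z = shiftY^[K] y is in the left set
    have hz : shiftY^[K] y ∈ shiftY^[K] '' {w : YShift | dY (shiftY^[K] x) w ≤ ε} :=
      ⟨y, by simp [Set.mem_setOf_eq, hdxy], rfl⟩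
    obtain ⟨w, hw, hweq⟩ := hsub hz
    -- every point of B(x, γε) starts with symbol 1, hence omits the symbol 2
    have hγε : γ * ε < 1 := by nlinarith
    have hw0 : w.1 0 = 1 := by
      by_cases hwx : w = x
      · rw [hwx]; simp [hxdef]
      · have hwx' : x ≠ w := fun h => hwx h.symm
        have hd : dY x w = (2 : ℝ)⁻¹ ^ sInf {n : ℕ | x.1 n ≠ w.1 n} := by
          simp [dY, hwx']
        by_contra h0
        have h0' : x.1 0 ≠ w.1 0 := by
          simp [hxdef]; exact fun h => h0 h.symm
        have : sInf {n : ℕ | x.1 n ≠ w.1 n} = 0 :=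
          Nat.eq_zero_of_le_zero (Nat.sInf_le h0')
        rw [Set.mem_setOf_eq, hd, this, pow_zero] at hw
        linarith
    have hw2 : ∀ n, w.1 n ≠ 2 := by
      rcases w.2 with h | h
      · exact h
      · exact absurd hw0 (h 0)
    -- but z has symbol 2 at position m
    have h1 : (shiftY^[2 * K] w).1 m = (shiftY^[K] y).1 m := by rw [hweq]
    rw [shiftY_iter, shiftY_iter] at h1
    have hy2 : y.1 (m + K) = 2 := by
      have : ¬ (m + K < m) := by omega
      simp [hydef, this]
    rw [hy2] at h1
    exact hw2 _ h1
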